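/- Fix an integer s ≥ 1, γ ∈ [0,1], assume δ_{11} > 0, δ_{10} > 0 and δ_{00} > 0, let Y̲^A ∈ ℝ satisfy Y̲^A ≤ Y^A_i for all units i, let x ≥ Y̲^A, and let μ be a Borel probability measure on ℝ with μ((−∞, Y̲^A)) = 0 such that F_A(u | 0,0) = (1 − γ)·F_A(u | 1,1) + γ·μ((−∞, u]) for all u ∈ ℝ. Then E_A[g_{s,x} | 1,1]·(δ_{11} + (1 − γ)·δ_{00}) + E_A[g_{s,x} | 1,0]·δ_{10} ≤ D^s_A(x) ≤ E_A[g_{s,x} | 1,1]·(δ_{11} + (1 − γ)·δ_{00}) + E_A[g_{s,x} | 1,0]·δ_{10} + ((x − Y̲^A)^{s−1}/(s−1)!)·γ·δ_{00}. (Population A part of Proposition D.4: identification bounds under the Kline–Santos mixture decomposition, in which a fraction γ of unit nonresponders is not represented by the distribution of complete responders.) -/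

import Mathlib

open Finset

noncomputable section

/-- Fraction of units in the response class `(a, b)`. -/
def delta {N : ℕ} (ZA ZB : Fin N → Bool) (a b : Bool) : ℝ :=
  ((univ.filter (fun i => ZA i = a ∧ ZB i = b)).card : ℝ) / N

/-- Conditional mean of `g ∘ Y` given the response class `(a, b)`. -/
def condMean {N : ℕ} (Y : Fin N → ℝ) (ZA ZB : Fin N → Bool) (a b : Bool) (g : ℝ → ℝ) : ℝ :=
  (∑ i ∈ univ.filter (fun i => ZA i = a ∧ ZB i = b), g (Y i)) / ((N : ℝ) * delta ZA ZB a b)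

/-- Conditional CDF of `Y` given the response class `(a, b)`. -/
def condCDF' {N : ℕ} (Y : Fin N → ℝ) (ZA ZB : Fin N → Bool) (a b : Bool) (x : ℝ) : ℝ :=
  ((univ.filter (fun i => Y i ≤ x ∧ ZA i = a ∧ ZB i = b)).card : ℝ) / ((N : ℝ) * delta ZA ZB a b)

/-- Population CDF of `Y`. -/
def popCDF {N : ℕ} (Y : Fin N → ℝ) (x : ℝ) : ℝ :=
  ((univ.filter (fun i => Y i ≤ x)).card : ℝ) / N

/-- `s`-th order dominance function of the population `Y`. -/
def domFn {N : ℕ} (Y : Fin N → ℝ) (s : ℕ) (x : ℝ) : ℝ :=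
  (∑ i ∈ univ.filter (fun i => Y i ≤ x), (x - Y i) ^ (s - 1) / ((s - 1).factorial : ℝ)) / N

/-- `g_{s,x}(y) = ((x-y)^{s-1}/(s-1)!) 1[y ≤ x]`. -/
def gfun (s : ℕ) (x : ℝ) : ℝ → ℝ :=
  fun y => ((x - y) ^ (s - 1) / ((s - 1).factorial : ℝ)) * (if y ≤ x then 1 else 0)

open MeasureTheory

private lemma integrable_dirac_aux (f : ℝ → ℝ) (a : ℝ) : Integrable f (Measure.dirac a) := by
  have h : f =ᵐ[Measure.dirac a] fun _ => f a := by
    rw [Filter.EventuallyEq, MeasureTheory.ae_dirac_eq]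
    exact Filter.eventually_pure.2 rfl
  exact (integrable_const (f a)).congr h.symm

set_option maxHeartbeats 1000000 in
/-- Population A part of Proposition D.4: identification bounds under the
Kline–Santos mixture decomposition, in which a fraction `γ` of unit nonresponders
is not represented by the distribution of complete responders. -/
theorem kline_santos_bounds_A {N : ℕ} (hN : 1 ≤ N)
    (YA YB : Fin N → ℝ) (ZA ZB : Fin N → Bool)
    (hno : ∀ i, ¬(ZA i = false ∧ ZB i = true))
    (s : ℕ) (hs : 1 ≤ s) (γ : ℝ) (hγ : γ ∈ Set.Icc (0 : ℝ) 1)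
    (h11 : 0 < delta ZA ZB true true) (h10 : 0 < delta ZA ZB true false)
    (h00 : 0 < delta ZA ZB false false)
    (YlA : ℝ) (hYA : ∀ i, YlA ≤ YA i)
    (x : ℝ) (hx : YlA ≤ x)
    (μ : Measure ℝ) [IsProbabilityMeasure μ] (hsupp : μ (Set.Iio YlA) = 0)
    (hmix : ∀ u : ℝ, condCDF' YA ZA ZB false false u =
      (1 - γ) * condCDF' YA ZA ZB true true u + γ * (μ (Set.Iic u)).toReal) :
    condMean YA ZA ZB true true (gfun s x)
        * (delta ZA ZB true true + (1 - γ) * delta ZA ZB false false)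
      + condMean YA ZA ZB true false (gfun s x) * delta ZA ZB true false
      ≤ domFn YA s x ∧
    domFn YA s x ≤
      condMean YA ZA ZB true true (gfun s x)
        * (delta ZA ZB true true + (1 - γ) * delta ZA ZB false false)
      + condMean YA ZA ZB true false (gfun s x) * delta ZA ZB true false
      + ((x - YlA) ^ (s - 1) / ((s - 1).factorial : ℝ)) * γ * delta ZA ZB false false := by
  classical
  obtain ⟨hγ0, hγ1⟩ := hγ
  have hNpos : (0 : ℝ) < N := by exact_mod_cast hN
  set F : Bool → Bool → Finset (Fin N) :=
    fun a b => univ.filter (fun i => ZA i = a ∧ ZB i = b) with hF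
  set n : Bool → Bool → ℝ := fun a b => ((F a b).card : ℝ) with hn
  have hδn : ∀ a b, delta ZA ZB a b = n a b / N := fun a b => rfl
  have hnδ : ∀ a b, (N : ℝ) * delta ZA ZB a b = n a b := by
    intro a b
    rw [hδn]
    field_simp
  have hn11 : 0 < n true true := by rw [← hnδ]; exact mul_pos hNpos h11
  have hn10 : 0 < n true false := by rw [← hnδ]; exact mul_pos hNpos h10
  have hn00 : 0 < n false false := by rw [← hnδ]; exact mul_pos hNpos h00
  set C : ℝ := (x - YlA) ^ (s - 1) / ((s - 1).factorial : ℝ) with hCdef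
  have hC0 : 0 ≤ C :=
    div_nonneg (pow_nonneg (sub_nonneg.2 hx) _) (Nat.cast_nonneg _)
  have hg_nonneg : ∀ y, 0 ≤ gfun s x y := by
    intro y
    unfold gfun
    by_cases h : y ≤ x
    · simp only [h, if_true, mul_one]
      exact div_nonneg (pow_nonneg (sub_nonneg.2 h) _) (Nat.cast_nonneg _)
    · simp [h]
  have hg_le : ∀ y, YlA ≤ y → gfun s x y ≤ C := by
    intro y hy
    unfold gfun
    by_cases h : y ≤ x
    · simp only [h, if_true, mul_one, hCdef]
      have hp : (x - y) ^ (s - 1) ≤ (x - YlA) ^ (s - 1) :=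
        pow_le_pow_left₀ (sub_nonneg.2 h) (by linarith) _
      exact div_le_div_of_nonneg_right hp (by positivity) |>.trans_eq rfl
    · simp only [h, if_false, mul_zero]
      exact hC0
  have hgm : Measurable (gfun s x) := by
    have h1 : Measurable fun y : ℝ => (x - y) ^ (s - 1) / ((s - 1).factorial : ℝ) := by
      fun_prop
    have h2 : Measurable fun y : ℝ => (if y ≤ x then (1 : ℝ) else 0) :=
      Measurable.ite measurableSet_Iic measurable_const measurable_const
    exact h1.mul h2
  -- empirical measures
  set κ : Bool → Bool → Measure ℝ := fun a b => ∑ i ∈ F a b, Measure.dirac (YA i) with hκ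
  have hκIic : ∀ a b u, κ a b (Set.Iic u)
      = (((F a b).filter (fun i => YA i ≤ u)).card : ENNReal) := by
    intro a b u
    simp only [hκ]
    rw [Measure.finset_sum_apply]
    have : ∀ i, Measure.dirac (YA i) (Set.Iic u) = if YA i ≤ u then (1 : ENNReal) else 0 := by
      intro i
      rw [Measure.dirac_apply' _ measurableSet_Iic]
      simp [Set.indicator_apply, Set.mem_Iic]
    simp_rw [this]
    rw [Finset.sum_boole]
  have hcond : ∀ a b u, condCDF' YA ZA ZB a b u
      = (((F a b).filter (fun i => YA i ≤ u)).card : ℝ) / n a b := by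
    intro a b u
    unfold condCDF'
    rw [hnδ]
    have hset : univ.filter (fun i => YA i ≤ u ∧ ZA i = a ∧ ZB i = b)
        = (F a b).filter (fun i => YA i ≤ u) := by
      simp only [hF, Finset.filter_filter]
      apply Finset.filter_congr
      intro i _
      tauto
    rw [hset]
  have hκfin : ∀ a b, IsFiniteMeasure (κ a b) := by
    intro a b
    constructor
    simp only [hκ]
    rw [Measure.finset_sum_apply]
    refine lt_of_le_of_lt (Finset.sum_le_card_nsmul _ _ 1 ?_) ?_
    · intro i _
      simp [Measure.dirac_apply' _ MeasurableSet.univ]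
    · simp
  haveI := hκfin false false
  haveI := hκfin true true
  set c1 : ℝ := (1 - γ) * n false false / n true true with hc1def
  set c2 : ℝ := γ * n false false with hc2def
  have hc1 : 0 ≤ c1 := by
    apply div_nonneg _ hn11.le
    exact mul_nonneg (by linarith) hn00.le
  have hc2 : 0 ≤ c2 := mul_nonneg hγ0 hn00.le
  have hκeq : κ false false = ENNReal.ofReal c1 • κ true true + ENNReal.ofReal c2 • μ := by
    refine Measure.ext_of_Iic _ _ (fun u => ?_)
    have hL : κ false false (Set.Iic u) ≠ ⊤ := by
      rw [hκIic]; exact ENNReal.natCast_ne_top _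
    have h11fin : κ true true (Set.Iic u) ≠ ⊤ := by
      rw [hκIic]; exact ENNReal.natCast_ne_top _
    have hμfin : μ (Set.Iic u) ≠ ⊤ := measure_ne_top _ _
    have hR : (ENNReal.ofReal c1 • κ true true + ENNReal.ofReal c2 • μ) (Set.Iic u) ≠ ⊤ := by
      rw [Measure.add_apply, Measure.smul_apply, Measure.smul_apply, smul_eq_mul, smul_eq_mul]
      exact ENNReal.add_ne_top.2 ⟨ENNReal.mul_ne_top ENNReal.ofReal_ne_top h11fin,
        ENNReal.mul_ne_top ENNReal.ofReal_ne_top hμfin⟩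
    rw [← ENNReal.toReal_eq_toReal_iff' hL hR]
    rw [Measure.add_apply, Measure.smul_apply, Measure.smul_apply, smul_eq_mul, smul_eq_mul,
      ENNReal.toReal_add (ENNReal.mul_ne_top ENNReal.ofReal_ne_top h11fin)
        (ENNReal.mul_ne_top ENNReal.ofReal_ne_top hμfin),
      ENNReal.toReal_mul, ENNReal.toReal_mul,
      ENNReal.toReal_ofReal hc1, ENNReal.toReal_ofReal hc2]
    have h := hmix u
    rw [hcond, hcond] at h
    rw [hκIic, hκIic, ENNReal.toReal_natCast, ENNReal.toReal_natCast]
    set a00 : ℝ := (((F false false).filter (fun i => YA i ≤ u)).card : ℝ)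
    set a11 : ℝ := (((F true true).filter (fun i => YA i ≤ u)).card : ℝ)
    set t : ℝ := (μ (Set.Iic u)).toReal
    rw [hc1def, hc2def]
    field_simp at h ⊢
    linarith
  -- integrals against empirical measures
  have hintκ : ∀ a b, Integrable (gfun s x) (κ a b) := by
    intro a b
    simp only [hκ]
    exact integrable_finset_sum_measure.2 fun i _ => integrable_dirac_aux _ _
  have hint : ∀ a b, ∫ y, gfun s x y ∂(κ a b) = ∑ i ∈ F a b, gfun s x (YA i) := by
    intro a b
    simp only [hκ]
    rw [integral_finset_sum_measure (fun i _ => integrable_dirac_aux _ _)]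
    exact Finset.sum_congr rfl fun i _ => integral_dirac _ _
  -- integrability against μ
  have haeb : ∀ᵐ y ∂μ, YlA ≤ y := by
    rw [ae_iff]
    simpa [not_le, Set.Iio] using hsupp
  have hintμ : Integrable (gfun s x) μ := by
    refine (integrable_const C).mono' hgm.aestronglyMeasurable ?_
    filter_upwards [haeb] with y hy
    rw [Real.norm_eq_abs, abs_of_nonneg (hg_nonneg y)]
    exact hg_le y hy
  set I : ℝ := ∫ y, gfun s x y ∂μ with hIdef
  have hI0 : 0 ≤ I := integral_nonneg hg_nonneg
  have hIC : I ≤ C := by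
    have h1 : I ≤ ∫ _, C ∂μ := by
      refine integral_mono_ae hintμ (integrable_const C) ?_
      filter_upwards [haeb] with y hy
      exact hg_le y hy
    simpa using h1
  -- key mixture identity for sums
  have hS00 : ∑ i ∈ F false false, gfun s x (YA i)
      = c1 * (∑ i ∈ F true true, gfun s x (YA i)) + c2 * I := by
    have h : ∫ y, gfun s x y ∂(κ false false)
        = ∫ y, gfun s x y ∂(ENNReal.ofReal c1 • κ true true + ENNReal.ofReal c2 • μ) := by
      rw [hκeq]
    rw [hint] at h
    rw [integral_add_measure ((hintκ true true).smul_measure ENNReal.ofReal_ne_top)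
        (hintμ.smul_measure ENNReal.ofReal_ne_top),
      integral_smul_measure, integral_smul_measure, hint,
      ENNReal.toReal_ofReal hc1, ENNReal.toReal_ofReal hc2, smul_eq_mul, smul_eq_mul] at h
    exact h
  -- decomposition of domFn
  have hdom : domFn YA s x = (∑ i : Fin N, gfun s x (YA i)) / N := by
    unfold domFn gfun
    rw [Finset.sum_filter]
    simp only [mul_ite, mul_one, mul_zero]
  have hpart : (∑ i : Fin N, gfun s x (YA i))
      = (∑ i ∈ F true true, gfun s x (YA i)) + (∑ i ∈ F true false, gfun s x (YA i))
        + (∑ i ∈ F false false, gfun s x (YA i)) := by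
    have hsplit1 := Finset.sum_filter_add_sum_filter_not univ (fun i => ZA i = true)
      (fun i => gfun s x (YA i))
    have hsplit2 := Finset.sum_filter_add_sum_filter_not
      (univ.filter (fun i => ZA i = true)) (fun i => ZB i = true) (fun i => gfun s x (YA i))
    have hsplit3 := Finset.sum_filter_add_sum_filter_not
      (univ.filter (fun i => ¬ ZA i = true)) (fun i => ZB i = true) (fun i => gfun s x (YA i))
    have he1 : (univ.filter (fun i => ZA i = true)).filter (fun i => ZB i = true)
        = F true true := by
      rw [Finset.filter_filter]
    have he2 : (univ.filter (fun i => ZA i = true)).filter (fun i => ¬ ZB i = true)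
        = F true false := by
      rw [Finset.filter_filter]
      apply Finset.filter_congr
      intro i _
      simp [Bool.not_eq_true]
    have he3 : (univ.filter (fun i => ¬ ZA i = true)).filter (fun i => ZB i = true)
        = (∅ : Finset (Fin N)) := by
      rw [Finset.filter_filter]
      rw [Finset.filter_eq_empty_iff]
      intro i _
      intro hcon
      exact hno i ⟨by simpa [Bool.not_eq_true] using hcon.1, hcon.2⟩
    have he4 : (univ.filter (fun i => ¬ ZA i = true)).filter (fun i => ¬ ZB i = true)
        = F false false := by
      rw [Finset.filter_filter]
      apply Finset.filter_congr
      intro i _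
      simp [Bool.not_eq_true]
    rw [he1, he2] at hsplit2
    rw [he3, he4] at hsplit3
    simp only [Finset.sum_empty, zero_add] at hsplit3
    rw [← hsplit1, ← hsplit2, ← hsplit3]
  have hm11 : condMean YA ZA ZB true true (gfun s x)
      = (∑ i ∈ F true true, gfun s x (YA i)) / n true true := by
    unfold condMean
    rw [hnδ]
  have hm10 : condMean YA ZA ZB true false (gfun s x)
      = (∑ i ∈ F true false, gfun s x (YA i)) / n true false := by
    unfold condMean
    rw [hnδ]
  set S11 := ∑ i ∈ F true true, gfun s x (YA i)
  set S10 := ∑ i ∈ F true false, gfun s x (YA i)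
  have hmain : domFn YA s x
      = condMean YA ZA ZB true true (gfun s x)
          * (delta ZA ZB true true + (1 - γ) * delta ZA ZB false false)
        + condMean YA ZA ZB true false (gfun s x) * delta ZA ZB true false
        + γ * n false false * I / N := by
    rw [hdom, hpart, hS00, hm11, hm10, hδn, hδn, hδn, hc1def, hc2def]
    have e11 : n true true ≠ 0 := hn11.ne'
    have e10 : n true false ≠ 0 := hn10.ne'
    have eN : (N : ℝ) ≠ 0 := hNpos.ne'
    clear_value n I
    set A := S11
    set B := S10
    set u := n true true
    set v := n true false
    set w := n false false
    field_simp
    ring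
  clear_value C I n S11 S10
  constructor
  · rw [hmain]
    have h0 : 0 ≤ γ * n false false * I / N :=
      div_nonneg (mul_nonneg (mul_nonneg hγ0 hn00.le) hI0) hNpos.le
    linarith
  · rw [hmain, hδn false false]
    have h1 : γ * n false false * I / N ≤ C * γ * (n false false / N) := by
      have hstep : γ * n false false * I ≤ C * γ * n false false := by
        have hm := mul_le_mul_of_nonneg_left hIC (mul_nonneg hγ0 hn00.le)
        calc γ * n false false * I = γ * n false false * I := rfl
          _ ≤ γ * n false false * C := hm
          _ = C * γ * n false false := by ring
      calc γ * n false false * I / N ≤ C * γ * n false false / N :=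
            div_le_div_of_nonneg_right hstep hNpos.le
        _ = C * γ * (n false false / N) := by rw [mul_div_assoc]
    linarith
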